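/- Let (X, μ) be a finite measure space, w : X → (0,∞) measurable with ∫ w dμ < ∞, and a > 0. If a probability density f : X → (0,∞) satisfies ∫ w f^(-a) dμ = (∫ w^(1/(a+1)) dμ)^(a+1), then f(x) = w(x)^(1/(a+1)) / ∫ w(y)^(1/(a+1)) dμ(y) for μ-almost every x ∈ X. -/

import Mathlib

open MeasureTheory Filter

open Real

lemma amgm_strict {θ p q : ℝ} (hθ0 : 0 < θ) (hθ1 : θ < 1) (hp : 0 < p) (hq : 0 < q)
    (hne : p ≠ q) : p ^ θ * q ^ (1 - θ) < θ * p + (1 - θ) * q := by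
  have h1 : p ^ θ = Real.exp (θ * Real.log p) := by
    rw [← Real.exp_log hp, ← Real.exp_mul, Real.log_exp, mul_comm]
  have h2 : q ^ (1 - θ) = Real.exp ((1 - θ) * Real.log q) := by
    rw [← Real.exp_log hq, ← Real.exp_mul, Real.log_exp, mul_comm]
  have hlog : Real.log p ≠ Real.log q := fun h => hne (Real.log_injOn_pos
    (Set.mem_Ioi.mpr hp) (Set.mem_Ioi.mpr hq) h)
  have := strictConvexOn_exp.2 (Set.mem_univ (Real.log p)) (Set.mem_univ (Real.log q))
    hlog hθ0 (show (0:ℝ) < 1 - θ by linarith) (show θ + (1 - θ) = 1 by ring)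
  simp only [smul_eq_mul] at this
  calc p ^ θ * q ^ (1 - θ) = Real.exp (θ * Real.log p + (1 - θ) * Real.log q) := by
        rw [h1, h2, Real.exp_add]
    _ < θ * Real.exp (Real.log p) + (1 - θ) * Real.exp (Real.log q) := this
    _ = θ * p + (1 - θ) * q := by rw [Real.exp_log hp, Real.exp_log hq]

lemma key_strict {a u : ℝ} (ha : 0 < a) (hu : 0 < u) (hne : u ≠ 1) :
    a + 1 < u ^ (-a) + a * u := by
  have hpne : u ^ (-a) ≠ u := by
    intro h
    apply hne
    have hl : -a * Real.log u = Real.log u := by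
      rw [← Real.log_rpow hu, h]
    have hl0 : Real.log u = 0 := by nlinarith
    rw [← Real.exp_log hu, hl0, Real.exp_zero]
  have h := amgm_strict (θ := 1/(a+1)) (by positivity) (by rw [div_lt_one (by linarith)]; linarith)
    (Real.rpow_pos_of_pos hu (-a)) hu hpne
  have hgm : (u ^ (-a)) ^ (1/(a+1)) * u ^ (1 - 1/(a+1)) = 1 := by
    rw [← Real.rpow_mul hu.le, ← Real.rpow_add hu, ← Real.rpow_zero u]
    congr 1
    field_simp
    simp only [Real.rpow_zero]; ring
  rw [hgm] at h
  have ha1 : (0:ℝ) < a + 1 := by linarith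
  have h' := mul_lt_mul_of_pos_left h ha1
  have e1 : (a+1) * (1/(a+1) * u^(-a) + (1 - 1/(a+1)) * u) = u^(-a) + a*u := by
    field_simp
    ring
  rw [e1, mul_one] at h'
  exact h'

open MeasureTheory Filter

lemma calcI1 {w f c p a : ℝ} (hw : 0 < w) (hf : 0 < f) (hc : 0 < c) (hpa : p * (a + 1) = 1) :
    (w ^ p * c ^ a) * (f * c / w ^ p) ^ (-a) = w * f ^ (-a) := by
  rw [Real.div_rpow (by positivity) (by positivity),
    Real.mul_rpow hf.le hc.le]
  have e2 : c ^ a * c ^ (-a) = 1 := by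
    rw [← Real.rpow_add hc]; simp
  have e3 : w ^ p / (w ^ p) ^ (-a) = w := by
    rw [← Real.rpow_mul hw.le, ← Real.rpow_sub hw,
      show p - p * -a = 1 by nlinarith, Real.rpow_one]
  calc (w ^ p * c ^ a) * (f ^ (-a) * c ^ (-a) / (w ^ p) ^ (-a))
      = (c ^ a * c ^ (-a)) * (w ^ p / (w ^ p) ^ (-a)) * f ^ (-a) := by ring
    _ = w * f ^ (-a) := by rw [e2, e3]; ring

lemma calcI2 {w f c p a : ℝ} (hw : 0 < w) (hc : 0 < c) :
    (w ^ p * c ^ a) * (f * c / w ^ p) = c ^ (a + 1) * f := by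
  have e1 : c ^ (a + 1) = c ^ a * c := Real.rpow_add_one hc.ne' a
  have hwp : (0:ℝ) < w ^ p := Real.rpow_pos_of_pos hw p
  field_simp [e1]
  rw [e1]; ring

/-- Equality case of the Hölder lower bound: if a probability density `f` attains
`∫ w f^(-a) dμ = (∫ w^(1/(a+1)) dμ)^(a+1)`, then `f` is μ-a.e. equal to the
normalized density proportional to `w^(1/(a+1))`. -/
theorem stmt_1 {X : Type*} [MeasurableSpace X] (μ : Measure X) [IsFiniteMeasure μ]
    (w : X → ℝ) (hw_meas : Measurable w) (hw_pos : ∀ x, 0 < w x)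
    (hw_int : Integrable w μ) (a : ℝ) (ha : 0 < a)
    (f : X → ℝ) (hf_meas : Measurable f) (hf_pos : ∀ᵐ x ∂μ, 0 < f x)
    (hf_int : ∫ x, f x ∂μ = 1)
    (heq : ∫⁻ x, ENNReal.ofReal (w x * f x ^ (-a)) ∂μ =
      ENNReal.ofReal ((∫ x, w x ^ (1 / (a + 1)) ∂μ) ^ (a + 1))) :
    ∀ᵐ x ∂μ, f x = w x ^ (1 / (a + 1)) / ∫ y, w y ^ (1 / (a + 1)) ∂μ := by
  rcases eq_or_ne μ 0 with hμ | hμ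
  · simp [hμ]
  have ha1 : (0:ℝ) < a + 1 := by linarith
  set p : ℝ := 1 / (a + 1) with hp_def
  have hp_pos : 0 < p := by positivity
  have hp_le : p ≤ 1 := by rw [hp_def, div_le_one ha1]; linarith
  have hpa : p * (a + 1) = 1 := by rw [hp_def]; field_simp
  set c : ℝ := ∫ y, w y ^ p ∂μ with hc_def
  -- integrability of w ^ p
  have hwp_meas : Measurable fun x => w x ^ p := by fun_prop
  have hwp_int : Integrable (fun x => w x ^ p) μ := by
    refine Integrable.mono' ((integrable_const (1:ℝ)).add hw_int)
      hwp_meas.aestronglyMeasurable (Filter.Eventually.of_forall fun x => ?_)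
    have hwx := hw_pos x
    have hnn : (0:ℝ) ≤ w x ^ p := (Real.rpow_pos_of_pos hwx p).le
    rw [Real.norm_of_nonneg hnn]
    show w x ^ p ≤ 1 + w x
    rcases le_total (w x) 1 with hle | hle
    · have := Real.rpow_le_one hwx.le hle hp_pos.le
      linarith
    · have := Real.rpow_le_rpow_of_exponent_le hle hp_le
      rw [Real.rpow_one] at this
      linarith
  have hc_pos : 0 < c := by
    rw [hc_def]
    refine (integral_pos_iff_support_of_nonneg
      (fun x => (Real.rpow_pos_of_pos (hw_pos x) p).le) hwp_int).2 ?_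
    have hsupp : Function.support (fun x => w x ^ p) = Set.univ :=
      Set.eq_univ_of_forall fun x => (Real.rpow_pos_of_pos (hw_pos x) p).ne'
    rw [hsupp]
    exact Measure.measure_univ_pos.mpr hμ
  -- integrability of f
  have hf_intg : Integrable f μ := by
    by_contra h
    rw [integral_undef h] at hf_int
    norm_num at hf_int
  -- the function g = w * f^(-a)
  have hg_meas : Measurable fun x => w x * f x ^ (-a) := by fun_prop
  have hg_nonneg : 0 ≤ᵐ[μ] fun x => w x * f x ^ (-a) := by
    filter_upwards [hf_pos] with x hx
    have := hw_pos x
    positivity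
  have hca_nonneg : (0:ℝ) ≤ c ^ (a + 1) := (Real.rpow_pos_of_pos hc_pos _).le
  have hg_fin : ∫⁻ x, ENNReal.ofReal (w x * f x ^ (-a)) ∂μ < ⊤ := by
    rw [heq]; exact ENNReal.ofReal_lt_top
  have hg_int : Integrable (fun x => w x * f x ^ (-a)) μ :=
    ⟨hg_meas.aestronglyMeasurable, (hasFiniteIntegral_iff_ofReal hg_nonneg).2 hg_fin⟩
  have hg_val : ∫ x, w x * f x ^ (-a) ∂μ = c ^ (a + 1) := by
    rw [integral_eq_lintegral_of_nonneg_ae hg_nonneg hg_meas.aestronglyMeasurable, heq,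
      ENNReal.toReal_ofReal hca_nonneg]
  -- the function G
  set G : X → ℝ := fun x =>
    w x * f x ^ (-a) + (a * c ^ (a + 1)) * f x - ((a + 1) * c ^ a) * w x ^ p with hG_def
  have hG_int : Integrable G μ :=
    (hg_int.add (hf_intg.const_mul _)).sub (hwp_int.const_mul _)
  have hG_val : ∫ x, G x ∂μ = 0 := by
    have hi1 : Integrable (fun x => w x * f x ^ (-a) + (a * c ^ (a + 1)) * f x) μ :=
      hg_int.add (hf_intg.const_mul _)
    have hi2 : Integrable (fun x => ((a + 1) * c ^ a) * w x ^ p) μ := hwp_int.const_mul _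
    rw [hG_def]
    rw [integral_sub hi1 hi2,
      integral_add hg_int (hf_intg.const_mul _), integral_const_mul, integral_const_mul,
      hg_val, hf_int, ← hc_def]
    have e1 : c ^ (a + 1) = c ^ a * c := Real.rpow_add_one hc_pos.ne' a
    rw [e1]; ring
  have hG_nonneg : 0 ≤ᵐ[μ] G := by
    filter_upwards [hf_pos] with x hx
    have hwx := hw_pos x
    have hwp : (0:ℝ) < w x ^ p := Real.rpow_pos_of_pos hwx p
    set u : ℝ := f x * c / w x ^ p with hu_def
    have hu : 0 < u := by positivity
    have hineq : a + 1 ≤ u ^ (-a) + a * u := by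
      rcases eq_or_ne u 1 with h1 | h1
      · rw [h1, Real.one_rpow]; linarith
      · exact (key_strict ha hu h1).le
    have hK : (0:ℝ) < w x ^ p * c ^ a := by positivity
    have hKey := mul_le_mul_of_nonneg_left hineq hK.le
    have I1 := calcI1 (f := f x) hwx hx hc_pos hpa
    have I2 := calcI2 (f := f x) (a := a) (p := p) hwx hc_pos
    rw [← hu_def] at I1 I2
    have expand : (w x ^ p * c ^ a) * (u ^ (-a) + a * u)
        = (w x ^ p * c ^ a) * u ^ (-a) + a * ((w x ^ p * c ^ a) * u) := by ring
    rw [expand, I1, I2] at hKey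
    show (0:ℝ) ≤ w x * f x ^ (-a) + a * c ^ (a + 1) * f x - (a + 1) * c ^ a * w x ^ p
    nlinarith [hKey]
  have hG0 : G =ᵐ[μ] 0 := (integral_eq_zero_iff_of_nonneg_ae hG_nonneg hG_int).1 hG_val
  filter_upwards [hf_pos, hG0] with x hx hGx
  have hwx := hw_pos x
  have hwp : (0:ℝ) < w x ^ p := Real.rpow_pos_of_pos hwx p
  by_contra hne
  set u : ℝ := f x * c / w x ^ p with hu_def
  have hu : 0 < u := by positivity
  have hu1 : u ≠ 1 := by
    intro h1
    apply hne
    rw [hu_def, div_eq_one_iff_eq hwp.ne'] at h1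
    rw [eq_div_iff hc_pos.ne']
    linarith [h1]
  have hstrict := key_strict ha hu hu1
  have hK : (0:ℝ) < w x ^ p * c ^ a := by positivity
  have hKey := mul_lt_mul_of_pos_left hstrict hK
  have I1 := calcI1 (f := f x) hwx hx hc_pos hpa
  have I2 := calcI2 (f := f x) (a := a) (p := p) hwx hc_pos
  rw [← hu_def] at I1 I2
  have expand : (w x ^ p * c ^ a) * (u ^ (-a) + a * u)
      = (w x ^ p * c ^ a) * u ^ (-a) + a * ((w x ^ p * c ^ a) * u) := by ring
  rw [expand, I1, I2] at hKey
  have hGx' : w x * f x ^ (-a) + a * c ^ (a + 1) * f x - (a + 1) * c ^ a * w x ^ p = 0 := hGx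
  nlinarith [hKey, hGx']
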